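/- arXiv:2307.15416 — 3 statements merged into one kernel-verified Lean document; each statement's English description precedes it below -/
import Mathlib

section
/- Let G and G' be abelian groups with G' torsion, and let β : G' → Hom(G, ℚ/ℤ) be an injective homomorphism. Endow G with the weakest topology making β(f) : G → ℚ/ℤ continuous for every f ∈ G' (where ℚ/ℤ is discrete). Then every continuous homomorphism G → ℚ/ℤ lies in the image of β; that is, β : G' → G^⋆ is a bijection onto the group of continuous homomorphisms G → ℚ/ℤ. -/
/-- The group `ℚ/ℤ`, endowed with the discrete topology. -/
def QZ : Type := AddCircle (1 : ℚ)

instance : AddCommGroup QZ := inferInstanceAs (AddCommGroup (AddCircle (1 : ℚ)))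
instance : TopologicalSpace QZ := ⊥
instance : DiscreteTopology QZ := ⟨rfl⟩
instance : IsTopologicalAddGroup QZ where
  continuous_add := continuous_of_discreteTopology
  continuous_neg := continuous_of_discreteTopology

noncomputable instance : DivisibleBy QZ ℤ := inferInstanceAs (DivisibleBy (AddCircle (1 : ℚ)) ℤ)

/-- Torsion elements of `ℚ/ℤ` of order dividing `n` are multiples of `1/n`. -/
lemma addCircle_torsion (n : ℕ) (hn : 0 < n) (t : AddCircle (1 : ℚ)) (ht : n • t = 0) :
    ∃ k : ℤ, t = k • ((((n : ℚ)⁻¹) : ℚ) : AddCircle (1 : ℚ)) := by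
  obtain ⟨q, rfl⟩ := QuotientAddGroup.mk_surjective t
  have hnq : ((n • q : ℚ) : AddCircle (1 : ℚ)) = 0 := by
    rw [← ht]; exact AddCircle.coe_nsmul (1 : ℚ)
  rw [AddCircle.coe_eq_zero_iff (1 : ℚ)] at hnq
  obtain ⟨k, hk⟩ := hnq
  have hn' : (n : ℚ) ≠ 0 := by exact_mod_cast hn.ne'
  rw [zsmul_eq_mul, mul_one, nsmul_eq_mul] at hk
  have hq : q = (k : ℚ) * (n : ℚ)⁻¹ := by
    rw [hk]; field_simp
  refine ⟨k, ?_⟩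
  rw [hq, show (k : ℚ) * (n : ℚ)⁻¹ = k • ((n : ℚ)⁻¹ : ℚ) by rw [zsmul_eq_mul],
    AddCircle.coe_zsmul (1 : ℚ)]

/-- A homomorphism `ℚ/ℤ → ℚ/ℤ` acts on `n`-torsion as multiplication by an integer. -/
lemma char_smul' (n : ℕ) (hn : 0 < n) (c : AddCircle (1 : ℚ) →+ AddCircle (1 : ℚ)) :
    ∃ m : ℤ, ∀ t : AddCircle (1 : ℚ), n • t = 0 → c t = m • t := by
  have hn' : (n : ℚ) ≠ 0 := by exact_mod_cast hn.ne'
  set g : AddCircle (1 : ℚ) := ((((n : ℚ)⁻¹) : ℚ) : AddCircle (1 : ℚ)) with hg_def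
  have hg : n • g = 0 := by
    have h1 : n • g = ((n • ((n : ℚ)⁻¹) : ℚ) : AddCircle (1 : ℚ)) :=
      (AddCircle.coe_nsmul (1 : ℚ)).symm
    rw [h1, nsmul_eq_mul, mul_inv_cancel₀ hn']
    exact AddCircle.coe_period (1 : ℚ)
  have hcg : n • c g = 0 := by rw [← map_nsmul, hg, map_zero]
  obtain ⟨m, hm⟩ := addCircle_torsion n hn (c g) hcg
  refine ⟨m, fun t ht => ?_⟩
  obtain ⟨k, hk⟩ := addCircle_torsion n hn t ht
  rw [hk, map_zsmul, hm, smul_comm]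

/-- A homomorphism `ℚ/ℤ → ℚ/ℤ` acts on `n`-torsion as multiplication by an integer. -/
lemma char_smul (n : ℕ) (hn : 0 < n) (c : QZ →+ QZ) :
    ∃ m : ℤ, ∀ t : QZ, n • t = 0 → c t = m • t :=
  char_smul' n hn c

/-- Let `G, G'` be abelian groups with `G'` torsion and
`β : G' → Hom(G, ℚ/ℤ)` an injective homomorphism.  Endow `G` with the weakest topology
making every `β f : G → ℚ/ℤ` continuous (with `ℚ/ℤ` discrete).  Then every continuous
homomorphism `G → ℚ/ℤ` lies in the image of `β`; i.e. `β : G' → G^⋆` is bijective. -/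
theorem statement_0 {G G' : Type*} [AddCommGroup G] [AddCommGroup G']
    (htor : ∀ f : G', ∃ n : ℕ, 0 < n ∧ n • f = 0)
    (β : G' →+ (G →+ QZ)) (hβ : Function.Injective β)
    (χ : G →+ QZ)
    (hχ : @Continuous G QZ
      (⨅ f : G', TopologicalSpace.induced (β f) inferInstance) inferInstance χ) :
    ∃ f : G', β f = χ := by
  classical
  -- Step 1: topology.  There is a finite set `I ⊆ G'` with `⋂_{f ∈ I} ker (β f) ⊆ ker χ`.
  have h0 : χ ⁻¹' {0} ∈
      @nhds G (⨅ f : G', TopologicalSpace.induced (β f) inferInstance) 0 := by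
    letI tG : TopologicalSpace G := ⨅ f : G', TopologicalSpace.induced (β f) inferInstance
    have hop : IsOpen (χ ⁻¹' {0}) := hχ.isOpen_preimage _ (isOpen_discrete _)
    exact hop.mem_nhds (by simp)
  rw [nhds_iInf] at h0
  simp_rw [nhds_induced, map_zero, nhds_discrete QZ] at h0
  obtain ⟨I, hIfin, V, hV, hU⟩ := Filter.mem_iInf.mp h0
  have key : ∀ x : G, (∀ f ∈ I, β f x = 0) → χ x = 0 := by
    intro x hx
    have : x ∈ ⋂ i : I, V i := by
      refine Set.mem_iInter.2 fun i => ?_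
      obtain ⟨W, hW, hWV⟩ := Filter.mem_comap.mp (hV i)
      apply hWV
      show β (i : G') x ∈ W
      rw [hx (i : G') i.2]
      exact Filter.mem_pure.mp hW
    rw [← hU] at this
    exact this
  -- Index the finite set by `Fin r`.
  haveI : Fintype I := hIfin.fintype
  set r : ℕ := Fintype.card I with hr
  set e : I ≃ Fin r := Fintype.equivFin I with he
  set F : Fin r → G' := fun i => ((e.symm i : I) : G') with hF
  -- orders
  have horder : ∀ i : Fin r, ∃ n : ℕ, 0 < n ∧ n • F i = 0 := fun i => htor (F i)
  choose n hn hnF using horder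
  -- the diagonal map Φ : G → (Fin r → QZ)
  set Φ : G →+ (Fin r → QZ) :=
    { toFun := fun x i => β (F i) x
      map_zero' := by funext i; simp
      map_add' := fun x y => by funext i; simp } with hΦ
  have hΦ_apply : ∀ (x : G) (i : Fin r), Φ x i = β (F i) x := fun _ _ => rfl
  have hker : ∀ x y : G, Φ x = Φ y → χ x = χ y := by
    intro x y hxy
    have h1 : χ (x - y) = 0 := by
      apply key
      intro f hf
      have : F (e ⟨f, hf⟩) = f := by
        simp [hF, Equiv.symm_apply_apply]
      rw [← this]
      have := congrFun hxy (e ⟨f, hf⟩)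
      rw [hΦ_apply, hΦ_apply] at this
      rw [map_sub, this, sub_self]
    rwa [map_sub, sub_eq_zero] at h1
  -- the image submodule and the induced character ψ on it
  set M : Submodule ℤ (Fin r → QZ) := LinearMap.range Φ.toIntLinearMap with hM
  have hmem : ∀ x : G, Φ x ∈ M := fun x => ⟨x, rfl⟩
  choose sec hsec using fun h : M => (h.2 : ∃ x : G, Φ.toIntLinearMap x = (h : Fin r → QZ))
  have hsec' : ∀ h : M, Φ (sec h) = (h : Fin r → QZ) := hsec
  set ψ : M →ₗ[ℤ] QZ :=
    { toFun := fun h => χ (sec h)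
      map_add' := fun a b => by
        show χ (sec (a + b)) = χ (sec a) + χ (sec b)
        have h1 : Φ (sec (a + b)) = Φ (sec a + sec b) := by
          rw [map_add, hsec' a, hsec' b, hsec' (a + b), Submodule.coe_add]
        rw [hker _ _ h1, map_add]
      map_smul' := fun m a => by
        show χ (sec (m • a)) = (RingHom.id ℤ) m • χ (sec a)
        have h1 : Φ (sec (m • a)) = Φ (m • sec a) := by
          rw [map_zsmul, hsec' a, hsec' (m • a), Submodule.coe_smul]
        rw [hker _ _ h1, map_zsmul]
        simp } with hψ
  have hψ_apply : ∀ h : M, ψ h = χ (sec h) := fun _ => rfl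
  -- extend ψ to all of Fin r → QZ using injectivity (divisibility) of QZ
  have baer : Module.Baer ℤ QZ := Module.Baer.of_divisible QZ
  obtain ⟨ψ', hψ'⟩ := baer.injective.out M.subtype (Submodule.injective_subtype M) ψ
  -- analyze ψ' coordinatewise
  have hc : ∀ i : Fin r, ∃ m : ℤ, ∀ t : QZ, n i • t = 0 →
      ψ' (Pi.single i t) = m • t := by
    intro i
    obtain ⟨m, hm⟩ := char_smul (n i) (hn i)
      (ψ'.toAddMonoidHom.comp (AddMonoidHom.single (fun _ : Fin r => QZ) i))
    exact ⟨m, fun t ht => hm t ht⟩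
  choose m hm using hc
  refine ⟨∑ i : Fin r, m i • F i, ?_⟩
  ext x
  have hχx : χ x = ψ' (Φ x) := by
    have h1 : ψ' (Φ x) = ψ ⟨Φ x, hmem x⟩ := hψ' ⟨Φ x, hmem x⟩
    rw [h1, hψ_apply]
    exact (hker _ _ (hsec' ⟨Φ x, hmem x⟩)).symm
  have hsplit : Φ x = ∑ i : Fin r, Pi.single i (β (F i) x) :=
    (Finset.univ_sum_single (Φ x)).symm
  have htors : ∀ i : Fin r, n i • β (F i) x = 0 := by
    intro i
    have : (n i • β (F i)) x = (0 : G →+ QZ) x := by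
      rw [← map_nsmul β, hnF i, map_zero]
    simpa using this
  calc β (∑ i : Fin r, m i • F i) x
      = ∑ i : Fin r, m i • β (F i) x := by simp
    _ = ∑ i : Fin r, ψ' (Pi.single i (β (F i) x)) := by
        refine Finset.sum_congr rfl fun i _ => ?_
        rw [hm i _ (htors i)]
    _ = ψ' (Φ x) := by rw [hsplit, map_sum]
    _ = χ x := hχx.symm
end

section
/- Let K be a discrete valuation field of characteristic p > 0 with normalized valuation v_K, and for n ≥ 0 let fil_n W_m(K) = { (a_{m-1}, …, a_0) ∈ W_m(K) : p^i v_K(a_i) ≥ −n for all i }. Let F̄ be the Frobenius on Witt vectors raising each component to the p-th power. Then for a ∈ W_m(K), one has (1 − F̄)(a) ∈ fil_n W_m(K) if and only if a ∈ fil_{⌊n/p⌋} W_m(K). -/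
open Multiplicative

open MvPolynomial
namespace Statement3Aux

variable {p : ℕ} [hp : Fact p.Prime]

/-- substitution of weighted homogeneous polynomials into a weighted homogeneous polynomial -/
theorem isWeightedHomogeneous_pow {τ R : Type*} [CommRing R] {w : τ → ℕ}
    {ψ : MvPolynomial τ R} {d : ℕ} (h : ψ.IsWeightedHomogeneous w d) (e : ℕ) :
    (ψ ^ e).IsWeightedHomogeneous w (e * d) := by
  induction e with
  | zero => simpa using isWeightedHomogeneous_one R w
  | succ k ih =>
    rw [pow_succ, Nat.succ_mul]
    exact ih.mul h

theorem isWeightedHomogeneous_aeval {σ τ R : Type*} [CommRing R] {w : σ → ℕ} {w' : τ → ℕ}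
    {φ : MvPolynomial σ R} {d : ℕ} (hφ : φ.IsWeightedHomogeneous w d)
    (f : σ → MvPolynomial τ R) (hf : ∀ s, (f s).IsWeightedHomogeneous w' (w s)) :
    (aeval f φ).IsWeightedHomogeneous w' d := by
  classical
  rw [← φ.support_sum_monomial_coeff, map_sum]
  apply MvPolynomial.IsWeightedHomogeneous.sum
  intro u hu
  rw [aeval_monomial]
  have hdeg : Finsupp.weight w u = d := hφ (MvPolynomial.mem_support_iff.mp hu)
  have h2 : (u.prod fun s e => f s ^ e).IsWeightedHomogeneous w' d := by
    rw [← hdeg, Finsupp.prod, Finsupp.weight_apply, Finsupp.sum]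
    apply MvPolynomial.IsWeightedHomogeneous.prod
    intro s _
    have := isWeightedHomogeneous_pow (hf s) (u s)
    simpa [smul_eq_mul] using this
  simpa using (isWeightedHomogeneous_C w' ((algebraMap R R) (coeff u φ))).mul h2

theorem wittPolynomial_isWeightedHomogeneous (k : ℕ) :
    (wittPolynomial p ℚ k).IsWeightedHomogeneous (fun i : ℕ => p ^ i) (p ^ k) := by
  rw [wittPolynomial]
  apply MvPolynomial.IsWeightedHomogeneous.sum
  intro i hi
  apply isWeightedHomogeneous_monomial
  rw [Finsupp.weight_apply, Finsupp.sum_single_index (by simp)]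
  have : i ≤ k := Nat.lt_succ_iff.mp (Finset.mem_range.mp hi)
  rw [smul_eq_mul, ← pow_add]
  congr 1
  omega

theorem xInTermsOfW_isWeightedHomogeneous (n : ℕ) :
    (xInTermsOfW p ℚ n).IsWeightedHomogeneous (fun i : ℕ => p ^ i) (p ^ n) := by
  induction n using Nat.strong_induction_on with | _ n IH => ?_
  rw [xInTermsOfW_eq]
  have h1 : (X n - ∑ i ∈ Finset.range n, C ((p : ℚ) ^ i) * xInTermsOfW p ℚ i ^ p ^ (n - i))
      |>.IsWeightedHomogeneous (fun i : ℕ => p ^ i) (p ^ n) := by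
    have hX : (X n : MvPolynomial ℕ ℚ).IsWeightedHomogeneous (fun i : ℕ => p ^ i) (p ^ n) :=
      isWeightedHomogeneous_X _ _ _
    have hsum : (∑ i ∈ Finset.range n, C ((p : ℚ) ^ i) * xInTermsOfW p ℚ i ^ p ^ (n - i))
        |>.IsWeightedHomogeneous (fun i : ℕ => p ^ i) (p ^ n) := by
      apply MvPolynomial.IsWeightedHomogeneous.sum
      intro i hi
      have hin : i < n := Finset.mem_range.mp hi
      have h := isWeightedHomogeneous_pow (IH i hin) (p ^ (n - i))
      have h' := (isWeightedHomogeneous_C (fun i : ℕ => p ^ i) ((p : ℚ) ^ i)).mul h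
      rw [zero_add] at h'
      convert h' using 1
      rw [← pow_add]
      congr 1
      omega
    have := (mem_weightedHomogeneousSubmodule ..).mpr hX
    have h2 := (mem_weightedHomogeneousSubmodule ..).mpr hsum
    exact (mem_weightedHomogeneousSubmodule ..).mp (Submodule.sub_mem _ this h2)
  have := h1.mul (isWeightedHomogeneous_C (fun i : ℕ => p ^ i) ((⅟(p : ℚ)) ^ n))
  simpa using this

theorem wittSub_isWeightedHomogeneous (j : ℕ) :
    (WittVector.wittSub p j).IsWeightedHomogeneous (fun s : Fin 2 × ℕ => p ^ s.2) (p ^ j) := by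
  have hrat : (wittStructureRat p (X 0 - X 1 : MvPolynomial (Fin 2) ℚ) j).IsWeightedHomogeneous
      (fun s : Fin 2 × ℕ => p ^ s.2) (p ^ j) := by
    rw [wittStructureRat]
    apply isWeightedHomogeneous_aeval (w := fun k : ℕ => p ^ k)
      (xInTermsOfW_isWeightedHomogeneous _)
    intro k
    rw [map_sub, bind₁_X_right, bind₁_X_right]
    have hr : ∀ b : Fin 2, (rename (Prod.mk b) (wittPolynomial p ℚ k)).IsWeightedHomogeneous
        (fun s : Fin 2 × ℕ => p ^ s.2) (p ^ k) := by
      intro b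
      rw [rename_eq_aeval]
      apply isWeightedHomogeneous_aeval (w := fun i : ℕ => p ^ i)
        (wittPolynomial_isWeightedHomogeneous k)
      intro s
      exact isWeightedHomogeneous_X _ _ _
    have h0 := (mem_weightedHomogeneousSubmodule ..).mpr (hr 0)
    have h1 := (mem_weightedHomogeneousSubmodule ..).mpr (hr 1)
    exact (mem_weightedHomogeneousSubmodule ..).mp (Submodule.sub_mem _ h0 h1)
  intro d hd
  have : MvPolynomial.coeff d (MvPolynomial.map (Int.castRingHom ℚ) (WittVector.wittSub p j)) ≠ 0 := by
    rw [MvPolynomial.coeff_map]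
    simpa using hd
  rw [WittVector.wittSub, map_wittStructureInt] at this
  have hmap : (MvPolynomial.map (Int.castRingHom ℚ) (X 0 - X 1 : MvPolynomial (Fin 2) ℤ))
      = (X 0 - X 1 : MvPolynomial (Fin 2) ℚ) := by
    rw [map_sub, map_X, map_X]
  rw [hmap] at this
  exact hrat this


variable {p : ℕ} [hp : Fact p.Prime] {K : Type*} [Field K]
  (v : Valuation K (WithZero (Multiplicative ℤ)))

theorem v_intCast_le_one (z : ℤ) : v (z : K) ≤ 1 := by
  induction z using Int.induction_on with
  | zero => simp
  | succ k ih =>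
    rw [Int.cast_add, Int.cast_one]
    exact le_trans (v.map_add_le ih (le_of_eq v.map_one)) (by simp)
  | pred k ih =>
    rw [Int.cast_sub, Int.cast_one]
    exact le_trans (v.map_sub_le ih (le_of_eq v.map_one)) (by simp)

theorem pow_sum_le {ι : Type*} (s : Finset ι) (f : ι → K) {M : ℕ} (hM : M ≠ 0)
    {B : WithZero (Multiplicative ℤ)} (h : ∀ t ∈ s, v (f t) ^ M ≤ B) :
    v (∑ t ∈ s, f t) ^ M ≤ B := by
  classical
  induction s using Finset.cons_induction with
  | empty => simpa [zero_pow hM] using zero_le'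
  | cons a s ha ih =>
    rw [Finset.sum_cons]
    have h1 := h a (Finset.mem_cons_self a s)
    have h2 := ih fun t ht => h t (Finset.mem_cons_of_mem ht)
    calc v (f a + ∑ t ∈ s, f t) ^ M
        ≤ max (v (f a)) (v (∑ t ∈ s, f t)) ^ M := pow_le_pow_left' (v.map_add _ _) M
      _ ≤ B := by
          rcases max_choice (v (f a)) (v (∑ t ∈ s, f t)) with hm | hm <;> rw [hm]
          · exact h1
          · exact h2

/-- the per-monomial valuation estimate -/
theorem term_bound {j M : ℕ} (d : (Fin 2 × ℕ) →₀ ℕ) (x : Fin 2 × ℕ → K)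
    {nn : WithZero (Multiplicative ℤ)} (hnn : 1 ≤ nn)
    (hx : ∀ s ∈ d.support, v (x s) ^ (p ^ M) ≤ nn ^ (p ^ (s.2 + 1)))
    (hd : Finsupp.weight (fun s : Fin 2 × ℕ => p ^ s.2) d = p ^ j) (z : ℤ) :
    v ((z : K) * ∏ s ∈ d.support, x s ^ d s) ^ (p ^ M) ≤ nn ^ (p ^ (j + 1)) := by
  have h1 : v ((z : K) * ∏ s ∈ d.support, x s ^ d s) ≤ v (∏ s ∈ d.support, x s ^ d s) := by
    rw [v.map_mul]
    exact mul_le_of_le_one_left' (v_intCast_le_one v z)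
  refine le_trans (pow_le_pow_left' h1 _) ?_
  rw [map_prod v]
  calc (∏ s ∈ d.support, v (x s ^ d s)) ^ p ^ M
      = ∏ s ∈ d.support, (v (x s) ^ (p ^ M)) ^ d s := by
        rw [← Finset.prod_pow]
        refine Finset.prod_congr rfl fun s _ => ?_
        rw [v.map_pow, ← pow_mul, ← pow_mul, mul_comm]
    _ ≤ ∏ s ∈ d.support, (nn ^ (p ^ (s.2 + 1))) ^ d s := by
        refine Finset.prod_le_prod' fun s hs => pow_le_pow_left' (hx s hs) _
    _ = nn ^ (∑ s ∈ d.support, p ^ (s.2 + 1) * d s) := by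
        rw [← Finset.prod_pow_eq_pow_sum]
        refine Finset.prod_congr rfl fun s _ => ?_
        rw [← pow_mul]
    _ ≤ nn ^ (p ^ (j + 1)) := by
        apply pow_le_pow_right' hnn
        have : ∑ s ∈ d.support, p ^ (s.2 + 1) * d s
            = p * ∑ s ∈ d.support, d s * p ^ s.2 := by
          rw [Finset.mul_sum]
          refine Finset.sum_congr rfl fun s _ => by ring
        rw [this]
        have hw : ∑ s ∈ d.support, d s * p ^ s.2 = p ^ j := by
          rw [← hd, Finsupp.weight_apply, Finsupp.sum]
          simp [smul_eq_mul]
        rw [hw, pow_succ, mul_comm]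

/-- support elements of a `p^j`-weighted-degree monomial have second component `≤ j` -/
theorem support_snd_le {j : ℕ} (d : (Fin 2 × ℕ) →₀ ℕ)
    (hd : Finsupp.weight (fun s : Fin 2 × ℕ => p ^ s.2) d = p ^ j)
    {s : Fin 2 × ℕ} (hs : s ∈ d.support) : s.2 ≤ j := by
  have h1 : d s * p ^ s.2 ≤ ∑ t ∈ d.support, d t * p ^ t.2 :=
    Finset.single_le_sum (f := fun t => d t * p ^ t.2) (fun t _ => Nat.zero_le _) hs
  have hw : ∑ t ∈ d.support, d t * p ^ t.2 = p ^ j := by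
    rw [← hd, Finsupp.weight_apply, Finsupp.sum]; simp [smul_eq_mul]
  have hds : 1 ≤ d s := Nat.one_le_iff_ne_zero.mpr (Finsupp.mem_support_iff.mp hs)
  have : p ^ s.2 ≤ p ^ j := le_trans (Nat.le_mul_of_pos_left _ hds) (hw ▸ h1)
  exact (Nat.pow_le_pow_iff_right hp.out.one_lt).mp this

/-- a `p^j`-weighted monomial containing a variable of weight `p^j` is that variable -/
theorem eq_single_of_mem {j : ℕ} (d : (Fin 2 × ℕ) →₀ ℕ)
    (hd : Finsupp.weight (fun s : Fin 2 × ℕ => p ^ s.2) d = p ^ j)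
    {s : Fin 2 × ℕ} (hs : s ∈ d.support) (hsj : s.2 = j) : d = Finsupp.single s 1 := by
  classical
  have hw : ∑ t ∈ d.support, d t * p ^ t.2 = p ^ j := by
    rw [← hd, Finsupp.weight_apply, Finsupp.sum]; simp [smul_eq_mul]
  rw [Finset.sum_eq_add_sum_sdiff_singleton_of_mem hs, hsj] at hw
  have hpj : 0 < p ^ j := pow_pos hp.out.pos j
  have hds : 1 ≤ d s := Nat.one_le_iff_ne_zero.mpr (Finsupp.mem_support_iff.mp hs)
  have hle : p ^ j ≤ d s * p ^ j := Nat.le_mul_of_pos_left _ hds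
  have hS0 : ∑ t ∈ d.support \ {s}, d t * p ^ t.2 = 0 := by omega
  have hds1 : d s = 1 := by
    have : d s * p ^ j = 1 * p ^ j := by omega
    exact Nat.eq_of_mul_eq_mul_right hpj this
  have hsub : d.support ⊆ {s} := by
    intro t ht
    by_contra hts
    have htm : t ∈ d.support \ {s} := Finset.mem_sdiff.mpr ⟨ht, hts⟩
    have := (Finset.sum_eq_zero_iff.mp hS0) t htm
    have hpt : 0 < p ^ t.2 := pow_pos hp.out.pos _
    have hdt : d t = 0 := by
      rcases Nat.mul_eq_zero.mp this with h | h
      · exact h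
      · omega
    exact (Finsupp.mem_support_iff.mp ht) hdt
  have := Finsupp.support_subset_singleton.mp hsub
  rw [this, hds1]


theorem div_pow_iff (γ : WithZero (Multiplicative ℤ)) {q : ℕ} (hq : q ≠ 0) (n : ℕ) :
    γ ^ q ≤ ((ofAdd ((n / p : ℕ) : ℤ) : Multiplicative ℤ) : WithZero (Multiplicative ℤ)) ↔
    γ ^ (q * p) ≤ ((ofAdd (n : ℤ) : Multiplicative ℤ) : WithZero (Multiplicative ℤ)) := by
  have hp0 : p ≠ 0 := hp.out.ne_zero
  by_cases hγ : γ = 0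
  · subst hγ
    simp [zero_pow hq, zero_pow (Nat.mul_ne_zero hq hp0)]
  · obtain ⟨g, rfl⟩ := WithZero.ne_zero_iff_exists.mp hγ
    rw [← WithZero.coe_pow, ← WithZero.coe_pow, WithZero.coe_le_coe, WithZero.coe_le_coe]
    simp only [← Multiplicative.toAdd_le, Int.toAdd_pow, toAdd_ofAdd]
    rw [Int.natCast_div,
      Int.le_ediv_iff_mul_le (by exact_mod_cast hp.out.pos), Nat.cast_mul, ← mul_assoc]

end Statement3Aux

/-- Kato's ramification filtration `fil_n W_m(K)` on truncated Witt vectors: writing a Witt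
vector as `(a_{m-1}, …, a_0)` (so that the coefficient of index `j` is `a_{m-1-j}`), it
consists of those `(a_{m-1}, …, a_0)` with `p^i v_K(a_i) ≥ -n` for all `i`.  In terms of a
multiplicative valuation `v : K → ℤₘ₀` (with `v(π) = ofAdd (-1)` for a uniformizer `π`),
the condition reads `v(x_j)^{p^{m-1-j}} ≤ ofAdd n`. -/
def wittFil (p m : ℕ) [hp : Fact p.Prime] (K : Type*) [CommRing K]
    (v : Valuation K (WithZero (Multiplicative ℤ))) (n : ℕ) :
    Set (TruncatedWittVector p m K) :=
  {x | ∀ j : Fin m,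
    (v (x.coeff j)) ^ (p ^ (m - 1 - (j : ℕ))) ≤
      ((ofAdd (n : ℤ) : Multiplicative ℤ) : WithZero (Multiplicative ℤ))}

/-- Let `K` be a discrete valuation field of characteristic `p > 0` with
normalized valuation `v_K`, and `F̄` the componentwise `p`-th power Frobenius on
`W_m(K)`.  Then for `a ∈ W_m(K)` and `n ≥ 0` one has `(1 - F̄)(a) ∈ fil_n W_m(K)` if and
only if `a ∈ fil_{⌊n/p⌋} W_m(K)`. -/
theorem statement_3 (p m : ℕ) [hp : Fact p.Prime] (K : Type*) [Field K] [CharP K p]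
    (v : Valuation K (WithZero (Multiplicative ℤ)))
    -- the valuation is normalized (in particular, discrete):
    (hv : ∀ d : ℤ, ∃ x : K, v x = ((ofAdd d : Multiplicative ℤ) : WithZero (Multiplicative ℤ)))
    (n : ℕ) (a : TruncatedWittVector p m K) :
    (a - TruncatedWittVector.mk p (fun j => (a.coeff j) ^ p)) ∈ wittFil p m K v n ↔
      a ∈ wittFil p m K v (n / p) := by
  classical
  clear hv
  have hp0 : p ≠ 0 := hp.out.ne_zero
  set nn : WithZero (Multiplicative ℤ) :=
    ((ofAdd (n : ℤ) : Multiplicative ℤ) : WithZero (Multiplicative ℤ)) with hnn_def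
  have hnn : (1 : WithZero (Multiplicative ℤ)) ≤ nn := by
    rw [hnn_def, ← WithZero.coe_one, WithZero.coe_le_coe, ← ofAdd_zero, Multiplicative.ofAdd_le]
    exact Int.ofNat_nonneg n
  set A : WittVector p K :=
    WittVector.mk p (fun i => if h : i < m then a.coeff ⟨i, h⟩ else 0) with hA_def
  have hA : ∀ i : Fin m, A.coeff i = a.coeff i := by
    intro i
    rw [hA_def, WittVector.coeff_mk, dif_pos i.isLt]
  have hA0 : ∀ i : ℕ, m ≤ i → A.coeff i = 0 := by
    intro i hi
    rw [hA_def, WittVector.coeff_mk, dif_neg (by omega)]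
  set B : WittVector p K := WittVector.mk p (fun i => (A.coeff i) ^ p) with hB_def
  have hB : ∀ i : ℕ, B.coeff i = (A.coeff i) ^ p := by
    intro i; rw [hB_def, WittVector.coeff_mk]
  set c : WittVector p K := A - B with hc_def
  have htr : WittVector.truncate m A = a := by
    ext i; rw [WittVector.coeff_truncate]; exact hA i
  have htrB : WittVector.truncate m B = TruncatedWittVector.mk p (fun j => (a.coeff j) ^ p) := by
    ext i
    rw [WittVector.coeff_truncate, TruncatedWittVector.coeff_mk, hB, hA]
  have hc : ∀ j : Fin m,
      (a - TruncatedWittVector.mk p (fun j => (a.coeff j) ^ p)).coeff j = c.coeff (j : ℕ) := by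
    intro j
    conv_lhs => rw [← htrB, ← htr, ← map_sub]
    rw [WittVector.coeff_truncate]
  have hccoeff : ∀ j : ℕ, c.coeff j =
      MvPolynomial.eval₂ (Int.castRingHom K) (Function.uncurry ![A.coeff, B.coeff])
        (WittVector.wittSub p j) := by
    intro j
    rw [hc_def, WittVector.sub_coeff]
    simp [WittVector.peval, MvPolynomial.aeval_def, algebraMap_int_eq]
  have hBcoeff : ∀ j : ℕ, B.coeff j =
      MvPolynomial.eval₂ (Int.castRingHom K) (Function.uncurry ![A.coeff, c.coeff])
        (WittVector.wittSub p j) := by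
    intro j
    have hBAc : B = A - c := by rw [hc_def, sub_sub_cancel]
    conv_lhs => rw [hBAc]
    rw [WittVector.sub_coeff]
    simp [WittVector.peval, MvPolynomial.aeval_def, algebraMap_int_eq]
  constructor
  · -- forward direction
    intro h
    simp only [wittFil, Set.mem_setOf_eq] at h ⊢
    have hcpow : ∀ i : ℕ, i < m → v (c.coeff i) ^ (p ^ m) ≤ nn ^ (p ^ (i + 1)) := by
      intro i him
      have h0 := h ⟨i, him⟩
      rw [hc ⟨i, him⟩] at h0
      simp only [Fin.val_mk] at h0
      have h1 := pow_le_pow_left' h0 (p ^ (i + 1))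
      rw [← pow_mul] at h1
      calc v (c.coeff i) ^ p ^ m
          = v (c.coeff i) ^ (p ^ (m - 1 - i) * p ^ (i + 1)) := by
            congr 1; rw [← pow_add]; congr 1; omega
        _ ≤ nn ^ (p ^ (i + 1)) := h1
    have key : ∀ j : ℕ, v (A.coeff j) ^ (p ^ m) ≤ nn ^ (p ^ j) := by
      intro j
      induction j using Nat.strong_induction_on with | _ j IH => ?_
      by_cases hjm : j < m
      swap
      · rw [hA0 j (le_of_not_gt hjm), v.map_zero, zero_pow (pow_ne_zero m hp0)]
        exact zero_le'
      by_cases hv1 : v (A.coeff j) ≤ 1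
      · exact le_trans (pow_le_one' hv1 _) (one_le_pow₀ hnn)
      push_neg at hv1
      set d₀ : (Fin 2 × ℕ) →₀ ℕ := Finsupp.single ((0 : Fin 2), j) 1 with hd₀_def
      set y : Fin 2 × ℕ → K := Function.uncurry ![A.coeff, c.coeff] with hy_def
      have hy0 : ∀ i : ℕ, y ((0 : Fin 2), i) = A.coeff i := by
        intro i; rw [hy_def]; simp [Function.uncurry]
      have hy1 : ∀ i : ℕ, y ((1 : Fin 2), i) = c.coeff i := by
        intro i; rw [hy_def]; simp [Function.uncurry]
      set T : ((Fin 2 × ℕ) →₀ ℕ) → K := fun d =>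
        (Int.castRingHom K) (MvPolynomial.coeff d (WittVector.wittSub p j)) *
          ∏ s ∈ d.support, y s ^ d s with hT_def
      have heval : (A.coeff j) ^ p =
          (∑ d ∈ (WittVector.wittSub p j).support.filter (fun d => d = d₀), T d) +
          (∑ d ∈ (WittVector.wittSub p j).support.filter (fun d => ¬ d = d₀), T d) := by
        rw [Finset.sum_filter_add_sum_filter_not, ← hB j, hBcoeff j, MvPolynomial.eval₂_eq]
      have hS1 : v (∑ d ∈ (WittVector.wittSub p j).support.filter (fun d => d = d₀), T d)
          ≤ v (A.coeff j) := by
        apply v.map_sum_le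
        intro d hd
        have hdd : d = d₀ := (Finset.mem_filter.mp hd).2
        subst hdd
        have hsupp : d₀.support = {((0 : Fin 2), j)} := by
          rw [hd₀_def]
          exact Finsupp.support_single_ne_zero _ one_ne_zero
        have hprod : ∏ s ∈ d₀.support, y s ^ d₀ s = A.coeff j := by
          rw [hsupp, Finset.prod_singleton, hd₀_def, Finsupp.single_eq_same, pow_one, hy0]
        simp only [hT_def, hprod]
        rw [map_mul]
        exact mul_le_of_le_one_left' (Statement3Aux.v_intCast_le_one v _)
      have hS2 : v (∑ d ∈ (WittVector.wittSub p j).support.filter (fun d => ¬ d = d₀), T d)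
          ^ (p ^ m) ≤ nn ^ (p ^ (j + 1)) := by
        apply Statement3Aux.pow_sum_le v _ _ (pow_ne_zero m hp0)
        intro d hd
        obtain ⟨hdsupp, hdne⟩ := Finset.mem_filter.mp hd
        have hdw := Statement3Aux.wittSub_isWeightedHomogeneous (p := p) j
          (MvPolynomial.mem_support_iff.mp hdsupp)
        simp only [hT_def, eq_intCast]
        apply Statement3Aux.term_bound v d y hnn ?_ hdw
        rintro ⟨b, i⟩ hs
        have hs2 : i ≤ j := Statement3Aux.support_snd_le d hdw hs
        fin_cases b
        · have hij : i < j := by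
            rcases lt_or_eq_of_le hs2 with h' | h'
            · exact h'
            · exfalso
              subst h'
              apply hdne
              rw [hd₀_def]
              exact Statement3Aux.eq_single_of_mem d hdw hs rfl
          show v (y ((0 : Fin 2), i)) ^ (p ^ m) ≤ nn ^ (p ^ (i + 1))
          rw [hy0]
          exact le_trans (IH i hij)
            (pow_le_pow_right' hnn (Nat.pow_le_pow_right hp.out.pos (Nat.le_succ i)))
        · show v (y ((1 : Fin 2), i)) ^ (p ^ m) ≤ nn ^ (p ^ (i + 1))
          rw [hy1]
          exact hcpow i (lt_of_le_of_lt hs2 hjm)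
      have hup : v ((A.coeff j) ^ p) ≤
          max (v (∑ d ∈ (WittVector.wittSub p j).support.filter (fun d => d = d₀), T d))
              (v (∑ d ∈ (WittVector.wittSub p j).support.filter (fun d => ¬ d = d₀), T d)) := by
        conv_lhs => rw [heval]
        exact v.map_add _ _
      have hlt : v (∑ d ∈ (WittVector.wittSub p j).support.filter (fun d => d = d₀), T d)
          < v ((A.coeff j) ^ p) := by
        rw [map_pow]
        refine lt_of_le_of_lt hS1 ?_
        conv_lhs => rw [← pow_one (v (A.coeff j))]
        exact pow_lt_pow_right₀ hv1 hp.out.one_lt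
      have hle2 : v ((A.coeff j) ^ p) ≤
          v (∑ d ∈ (WittVector.wittSub p j).support.filter (fun d => ¬ d = d₀), T d) := by
        rcases max_cases (v (∑ d ∈ (WittVector.wittSub p j).support.filter (fun d => d = d₀), T d))
          (v (∑ d ∈ (WittVector.wittSub p j).support.filter (fun d => ¬ d = d₀), T d)) with
          ⟨he, _⟩ | ⟨he, _⟩
        · rw [he] at hup
          exact absurd hup (not_le.mpr hlt)
        · rw [he] at hup
          exact hup
      calc v (A.coeff j) ^ p ^ m
          = (v ((A.coeff j) ^ p)) ^ (p ^ (m - 1)) := by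
            rw [map_pow, ← pow_mul, ← pow_succ']
            have hm1 : m - 1 + 1 = m := by omega
            rw [hm1]
        _ ≤ (v (∑ d ∈ (WittVector.wittSub p j).support.filter (fun d => ¬ d = d₀), T d))
              ^ (p ^ (m - 1)) := pow_le_pow_left' hle2 _
        _ ≤ nn ^ (p ^ j) := by
            apply (pow_le_pow_iff_left₀ zero_le' zero_le' hp0).mp
            rw [← pow_mul, ← pow_mul]
            have e1 : p ^ (m - 1) * p = p ^ m := by
              have hm1 : m - 1 + 1 = m := by omega
              rw [← pow_succ, hm1]
            have e2 : p ^ j * p = p ^ (j + 1) := by rw [← pow_succ]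
            rw [e1, e2]
            exact hS2
    intro j
    apply (Statement3Aux.div_pow_iff (p := p) _ (pow_ne_zero _ hp0) n).mpr
    rw [← hA j]
    apply (pow_le_pow_iff_left₀ zero_le' zero_le' (pow_ne_zero (j : ℕ) hp0)).mp
    rw [← pow_mul]
    have e : (p ^ (m - 1 - (j : ℕ)) * p) * p ^ (j : ℕ) = p ^ m := by
      rw [mul_assoc, ← pow_succ', ← pow_add]
      congr 1
      omega
    rw [e]
    exact key (j : ℕ)
  · -- backward direction
    intro h
    simp only [wittFil, Set.mem_setOf_eq] at h ⊢
    have hx : ∀ s : Fin 2 × ℕ,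
        v (Function.uncurry ![A.coeff, B.coeff] s) ^ (p ^ m) ≤ nn ^ (p ^ (s.2 + 1)) := by
      rintro ⟨b, i⟩
      by_cases him : i < m
      · have hG : v (A.coeff i) ^ (p ^ (m - 1 - i) * p) ≤ nn := by
          have h0 := h ⟨i, him⟩
          simp only [Fin.val_mk] at h0
          have := (Statement3Aux.div_pow_iff (p := p) (v (a.coeff ⟨i, him⟩))
            (pow_ne_zero (m - 1 - i) hp0) n).mp h0
          rw [← hA ⟨i, him⟩] at this
          simpa using this
        fin_cases b
        · show v (Function.uncurry ![A.coeff, B.coeff] ((0 : Fin 2), i)) ^ (p ^ m)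
            ≤ nn ^ (p ^ (i + 1))
          have hval : Function.uncurry ![A.coeff, B.coeff] ((0 : Fin 2), i) = A.coeff i := by
            simp [Function.uncurry]
          rw [hval]
          calc v (A.coeff i) ^ (p ^ m)
              = (v (A.coeff i) ^ (p ^ (m - 1 - i) * p)) ^ (p ^ i) := by
                rw [← pow_mul]; congr 1
                rw [mul_assoc, ← pow_succ', ← pow_add]
                congr 1
                omega
            _ ≤ nn ^ (p ^ i) := pow_le_pow_left' hG _
            _ ≤ nn ^ (p ^ (i + 1)) :=
                pow_le_pow_right' hnn (Nat.pow_le_pow_right hp.out.pos (Nat.le_succ i))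
        · show v (Function.uncurry ![A.coeff, B.coeff] ((1 : Fin 2), i)) ^ (p ^ m)
            ≤ nn ^ (p ^ (i + 1))
          have hval : Function.uncurry ![A.coeff, B.coeff] ((1 : Fin 2), i) = (A.coeff i) ^ p := by
            simp [Function.uncurry, hB]
          rw [hval]
          calc v ((A.coeff i) ^ p) ^ (p ^ m)
              = (v (A.coeff i) ^ (p ^ (m - 1 - i) * p)) ^ (p ^ (i + 1)) := by
                rw [map_pow, ← pow_mul, ← pow_mul]
                congr 1
                rw [mul_assoc, ← pow_succ', ← pow_succ', ← pow_add]
                congr 1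
                omega
            _ ≤ nn ^ (p ^ (i + 1)) := pow_le_pow_left' hG _
      · have h0 : A.coeff i = 0 := hA0 i (le_of_not_gt him)
        have h1 : B.coeff i = 0 := by rw [hB, h0, zero_pow hp0]
        have hz : Function.uncurry ![A.coeff, B.coeff] (b, i) = 0 := by
          fin_cases b
          · show Function.uncurry ![A.coeff, B.coeff] ((0 : Fin 2), i) = 0
            simp [Function.uncurry, h0]
          · show Function.uncurry ![A.coeff, B.coeff] ((1 : Fin 2), i) = 0
            simp [Function.uncurry, h1]
        rw [hz, v.map_zero, zero_pow (pow_ne_zero m hp0)]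
        exact zero_le'
    intro j
    rw [hc j, hccoeff (j : ℕ)]
    apply (pow_le_pow_iff_left₀ zero_le' zero_le' (pow_ne_zero ((j : ℕ) + 1) hp0)).mp
    rw [← pow_mul]
    have e : p ^ (m - 1 - (j : ℕ)) * p ^ ((j : ℕ) + 1) = p ^ m := by
      rw [← pow_add]; congr 1; omega
    rw [e]
    rw [MvPolynomial.eval₂_eq]
    apply Statement3Aux.pow_sum_le v _ _ (pow_ne_zero m hp0)
    intro d hd
    simp only [eq_intCast]
    exact Statement3Aux.term_bound v d _ hnn (fun s _ => hx s)
      (Statement3Aux.wittSub_isWeightedHomogeneous (p := p) _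
        (MvPolynomial.mem_support_iff.mp hd)) _
end

section
/- Let K be a discrete valuation field of characteristic p with valuation v_K and let fil_n W_m(K) = { (a_{m-1},…,a_0) : p^i v_K(a_i) ≥ −n }. Then the sequence 0 → fil_n W_1(K) → fil_n W_m(K) → fil_{⌊n/p⌋} W_{m-1}(K) → 0 is exact, where the first map is the (m−1)-fold Verschiebung V^{m-1} and the second is the restriction R. -/
open Multiplicative

lemma aux_pow_le (p : ℕ) (hp : 0 < p) (n : ℕ) (t : WithZero (Multiplicative ℤ)) :
    t ^ p ≤ ((ofAdd ((n : ℕ) : ℤ) : Multiplicative ℤ) : WithZero (Multiplicative ℤ)) ↔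
      t ≤ ((ofAdd (((n / p : ℕ) : ℤ)) : Multiplicative ℤ) : WithZero (Multiplicative ℤ)) := by
  by_cases ht : t = 0
  · subst ht
    simp [zero_pow hp.ne', zero_le']
  · obtain ⟨g, rfl⟩ := WithZero.ne_zero_iff_exists.mp ht
    rw [← ofAdd_toAdd g, ← WithZero.coe_pow, WithZero.coe_le_coe, WithZero.coe_le_coe,
      ← ofAdd_nsmul, Multiplicative.ofAdd_le, Multiplicative.ofAdd_le, nsmul_eq_mul, mul_comm]
    rw [Int.natCast_ediv]
    exact (Int.le_ediv_iff_mul_le (by exact_mod_cast hp)).symm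

/-- Let `K` be a discrete valuation field of characteristic `p`.  Then the
sequence `0 → fil_n W_1(K) → fil_n W_m(K) → fil_{⌊n/p⌋} W_{m-1}(K) → 0` is exact, where the
first map is the `(m-1)`-fold Verschiebung `V^{m-1} : a ↦ (0, …, 0, a)` and the second is
the restriction `R` (dropping the last coordinate):
(1) `V^{m-1}` maps `fil_n W_1(K) = {a : v_K(a) ≥ -n}` into `fil_n W_m(K)` and is injective;
(2) `R` maps `fil_n W_m(K)` into `fil_{⌊n/p⌋} W_{m-1}(K)` and onto it;
(3) an element of `fil_n W_m(K)` is killed by `R` iff it is `V^{m-1}(a)` for some `a` with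
    `v_K(a) ≥ -n`. -/
theorem statement_4 (p m : ℕ) [hp : Fact p.Prime] (hm : 1 ≤ m)
    (K : Type*) [Field K] [CharP K p]
    (v : Valuation K (WithZero (Multiplicative ℤ)))
    (hv : ∀ d : ℤ, ∃ x : K, v x = ((ofAdd d : Multiplicative ℤ) : WithZero (Multiplicative ℤ)))
    (n : ℕ) :
    -- the Verschiebung `V^{m-1} : W_1(K) = K → W_m(K)`, `a ↦ (0, …, 0, a)`
    letI Vm : K → TruncatedWittVector p m K :=
      fun a => TruncatedWittVector.mk p (fun j => if (j : ℕ) = m - 1 then a else 0)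
    -- the restriction `R : W_m(K) → W_{m-1}(K)`
    letI Rm : TruncatedWittVector p m K → TruncatedWittVector p (m - 1) K :=
      TruncatedWittVector.truncate (Nat.sub_le m 1)
    (∀ a : K, v a ≤ ((ofAdd (n : ℤ) : Multiplicative ℤ) : WithZero (Multiplicative ℤ)) →
        Vm a ∈ wittFil p m K v n) ∧
    Function.Injective Vm ∧
    (∀ x ∈ wittFil p m K v n, Rm x ∈ wittFil p (m - 1) K v (n / p)) ∧
    (∀ y ∈ wittFil p (m - 1) K v (n / p), ∃ x ∈ wittFil p m K v n, Rm x = y) ∧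
    (∀ x ∈ wittFil p m K v n, (Rm x = 0 ↔
        ∃ a : K, v a ≤ ((ofAdd (n : ℤ) : Multiplicative ℤ) : WithZero (Multiplicative ℤ)) ∧
          Vm a = x)) := by
  have hp0 : 0 < p := hp.out.pos
  refine ⟨?_, ?_, ?_, ?_, ?_⟩
  · -- (1) V lands in fil_n
    intro a ha j
    simp only [TruncatedWittVector.coeff_mk]
    by_cases hj : (j : ℕ) = m - 1
    · rw [if_pos hj, hj, Nat.sub_self, pow_zero, pow_one]
      exact ha
    · rw [if_neg hj, map_zero, zero_pow (pow_ne_zero _ hp0.ne')]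
      exact zero_le'
  · -- injectivity
    intro a b hab
    have := congrArg (TruncatedWittVector.coeff (⟨m - 1, by omega⟩ : Fin m)) hab
    simpa [TruncatedWittVector.coeff_mk] using this
  · -- (2) R maps fil_n into fil_{n/p}
    intro x hx j
    simp only [TruncatedWittVector.coeff_truncate]
    have hj : (j : ℕ) < m - 1 := j.2
    have h1 : m - 1 - (j : ℕ) = (m - 1 - 1 - (j : ℕ)) + 1 := by omega
    have hxj := hx (Fin.castLE (Nat.sub_le m 1) j)
    simp only [Fin.coe_castLE] at hxj
    rw [h1, pow_succ, pow_mul] at hxj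
    exact (aux_pow_le p hp0 n _).mp hxj
  · -- surjectivity of R
    intro y hy
    refine ⟨TruncatedWittVector.mk p
      (fun j => if h : (j : ℕ) < m - 1 then y.coeff ⟨j, h⟩ else 0), ?_, ?_⟩
    · intro j
      simp only [TruncatedWittVector.coeff_mk]
      by_cases hj : (j : ℕ) < m - 1
      · rw [dif_pos hj]
        have hyj := hy ⟨j, hj⟩
        have h1 : m - 1 - (j : ℕ) = (m - 1 - 1 - (j : ℕ)) + 1 := by omega
        rw [h1, pow_succ, pow_mul]
        exact (aux_pow_le p hp0 n _).mpr hyj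
      · rw [dif_neg hj, map_zero, zero_pow (pow_ne_zero _ hp0.ne')]
        exact zero_le'
    · ext j
      simp only [TruncatedWittVector.coeff_truncate, TruncatedWittVector.coeff_mk,
        Fin.coe_castLE]
      rw [dif_pos j.2]
  · -- kernel of R
    intro x hx
    constructor
    · intro hR
      refine ⟨x.coeff ⟨m - 1, by omega⟩, ?_, ?_⟩
      · have := hx ⟨m - 1, by omega⟩
        simpa [Nat.sub_self] using this
      · ext j
        simp only [TruncatedWittVector.coeff_mk]
        by_cases hj : (j : ℕ) = m - 1
        · rw [if_pos hj]
          congr 1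
          exact Fin.ext hj.symm
        · rw [if_neg hj]
          have hj' : (j : ℕ) < m - 1 := by have := j.2; omega
          have h := congrArg (TruncatedWittVector.coeff (⟨j, hj'⟩ : Fin (m - 1))) hR
          simpa [TruncatedWittVector.coeff_truncate] using h.symm
    · rintro ⟨a, ha, rfl⟩
      ext j
      have hj : (j : ℕ) ≠ m - 1 := by
        have := j.2; omega
      simp [TruncatedWittVector.coeff_truncate, TruncatedWittVector.coeff_mk, hj]
end
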